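/- Let n and k be natural numbers with k ≤ n. Call a permutation α of {1,…,n} block-increasing if α is strictly increasing on {1,…,n-k} and strictly increasing on {n-k+1,…,n}. Then the map (α, β, γ) ↦ α ∘ (β ⊕ γ), where α is block-increasing, β ∈ S_{n-k}, γ ∈ S_k, and β ⊕ γ denotes the block-diagonal permutation acting as β on the first n-k positions and as γ on the last k positions, is a bijection onto S_n, and moreover inv(α ∘ (β ⊕ γ)) = inv(α) + inv(β) + inv(γ). -/

import Mathlib

open Finset

/-- The number of inversions of a permutation `σ` of `{0, …, n-1}`:
the number of pairs `(i, j)` with `i < j` and `σ j < σ i`. -/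
def inversions {n : ℕ} (σ : Equiv.Perm (Fin n)) : ℕ :=
  (Finset.univ.filter fun p : Fin n × Fin n => p.1 < p.2 ∧ σ p.2 < σ p.1).card

/-- A permutation of `{0, …, n-1}` is block-increasing (with respect to the splitting into the
first `n - k` positions and the last `k` positions) if it is strictly increasing on each block. -/
def BlockIncreasing {n : ℕ} (k : ℕ) (α : Equiv.Perm (Fin n)) : Prop :=
  (∀ i j : Fin n, i < j → (j : ℕ) < n - k → α i < α j) ∧
  (∀ i j : Fin n, i < j → n - k ≤ (i : ℕ) → α i < α j)

/-- The block-diagonal permutation `β ⊕ γ` of `{0, …, n-1}` acting as `β` on the first `n - k`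
positions and as `γ` on the last `k` positions. -/
def blockSum {n k : ℕ} (h : k ≤ n) (β : Equiv.Perm (Fin (n - k))) (γ : Equiv.Perm (Fin k)) :
    Equiv.Perm (Fin n) :=
  (finCongr (Nat.sub_add_cancel h)).permCongr
    (finSumFinEquiv.symm.trans ((Equiv.sumCongr β γ).trans finSumFinEquiv))

namespace BSaux

variable {n k : ℕ}

lemma perm_apply_inv_self {α : Type*} (f : Equiv.Perm α) (x : α) : f (f⁻¹ x) = x :=
  f.apply_symm_apply x

lemma bs_lt (h : k ≤ n) (β : Equiv.Perm (Fin (n - k))) (γ : Equiv.Perm (Fin k))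
    (x : Fin n) (hx : (x : ℕ) < n - k) :
    ((blockSum h β γ x : Fin n) : ℕ) = β ⟨x, hx⟩ := by
  have e : (Fin.cast (Nat.sub_add_cancel h).symm x) = Fin.castAdd k ⟨x, hx⟩ := by
    ext; simp
  simp only [blockSum, Equiv.permCongr_apply, finCongr_symm, finCongr_apply,
    Equiv.trans_apply, Equiv.sumCongr_apply]
  rw [e, finSumFinEquiv_symm_apply_castAdd]
  simp

lemma bs_ge (h : k ≤ n) (β : Equiv.Perm (Fin (n - k))) (γ : Equiv.Perm (Fin k))
    (x : Fin n) (hx : n - k ≤ (x : ℕ)) :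
    ((blockSum h β γ x : Fin n) : ℕ)
      = (n - k) + γ ⟨(x : ℕ) - (n - k), by omega⟩ := by
  have e : (Fin.cast (Nat.sub_add_cancel h).symm x)
      = Fin.natAdd (n - k) ⟨(x : ℕ) - (n - k), by omega⟩ := by
    ext; simp; omega
  simp only [blockSum, Equiv.permCongr_apply, finCongr_symm, finCongr_apply,
    Equiv.trans_apply, Equiv.sumCongr_apply]
  rw [e, finSumFinEquiv_symm_apply_natAdd]
  simp

lemma bs_lt' (h : k ≤ n) (β : Equiv.Perm (Fin (n - k))) (γ : Equiv.Perm (Fin k))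
    (x : Fin n) (hx : (x : ℕ) < n - k) : ((blockSum h β γ x : Fin n) : ℕ) < n - k := by
  rw [bs_lt h β γ x hx]; exact (β ⟨x, hx⟩).2

lemma bs_ge' (h : k ≤ n) (β : Equiv.Perm (Fin (n - k))) (γ : Equiv.Perm (Fin k))
    (x : Fin n) (hx : n - k ≤ (x : ℕ)) : n - k ≤ ((blockSum h β γ x : Fin n) : ℕ) := by
  rw [bs_ge h β γ x hx]; omega

lemma bsinv_lt (h : k ≤ n) (β : Equiv.Perm (Fin (n - k))) (γ : Equiv.Perm (Fin k))
    (x : Fin n) (hx : (x : ℕ) < n - k) : (((blockSum h β γ)⁻¹ x : Fin n) : ℕ) < n - k := by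
  by_contra hc
  have := bs_ge' h β γ _ (le_of_not_gt hc)
  rw [perm_apply_inv_self] at this
  omega

lemma bsinv_ge (h : k ≤ n) (β : Equiv.Perm (Fin (n - k))) (γ : Equiv.Perm (Fin k))
    (x : Fin n) (hx : n - k ≤ (x : ℕ)) : n - k ≤ (((blockSum h β γ)⁻¹ x : Fin n) : ℕ) := by
  by_contra hc
  have := bs_lt' h β γ _ (lt_of_not_ge hc)
  rw [perm_apply_inv_self] at this
  omega

lemma bi_iff_left {α : Equiv.Perm (Fin n)} (hα : BlockIncreasing k α)
    {u v : Fin n} (hu : (u : ℕ) < n - k) (hv : (v : ℕ) < n - k) : α u < α v ↔ u < v := by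
  constructor
  · intro huv
    rcases lt_trichotomy u v with hlt | heq | hgt
    · exact hlt
    · exact absurd huv (by simp [heq])
    · exact absurd (hα.1 v u hgt hu) (not_lt.mpr (le_of_lt huv))
  · intro huv
    exact hα.1 u v huv hv

lemma bi_iff_right {α : Equiv.Perm (Fin n)} (hα : BlockIncreasing k α)
    {u v : Fin n} (hu : n - k ≤ (u : ℕ)) (hv : n - k ≤ (v : ℕ)) : α u < α v ↔ u < v := by
  constructor
  · intro huv
    rcases lt_trichotomy u v with hlt | heq | hgt
    · exact hlt
    · exact absurd huv (by simp [heq])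
    · exact absurd (hα.2 v u hgt hv) (not_lt.mpr (le_of_lt huv))
  · intro huv
    exact hα.2 u v huv hu


def cLL (m : ℕ) (σ : Equiv.Perm (Fin n)) : ℕ :=
  (univ.filter fun p : Fin n × Fin n => (p.1 < p.2 ∧ σ p.2 < σ p.1) ∧ (p.2 : ℕ) < m).card

def cLR (m : ℕ) (σ : Equiv.Perm (Fin n)) : ℕ :=
  (univ.filter fun p : Fin n × Fin n =>
    (p.1 < p.2 ∧ σ p.2 < σ p.1) ∧ (p.1 : ℕ) < m ∧ m ≤ (p.2 : ℕ)).card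

def cRR (m : ℕ) (σ : Equiv.Perm (Fin n)) : ℕ :=
  (univ.filter fun p : Fin n × Fin n => (p.1 < p.2 ∧ σ p.2 < σ p.1) ∧ m ≤ (p.1 : ℕ)).card

lemma inversions_split (m : ℕ) (σ : Equiv.Perm (Fin n)) :
    inversions σ = cLL m σ + cLR m σ + cRR m σ := by
  classical
  have h1 := Finset.card_filter_add_card_filter_not
      (s := univ.filter fun p : Fin n × Fin n => p.1 < p.2 ∧ σ p.2 < σ p.1)
      (p := fun p : Fin n × Fin n => (p.2 : ℕ) < m)
  have h2 := Finset.card_filter_add_card_filter_not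
      (s := univ.filter fun p : Fin n × Fin n =>
        (p.1 < p.2 ∧ σ p.2 < σ p.1) ∧ m ≤ (p.2 : ℕ))
      (p := fun p : Fin n × Fin n => (p.1 : ℕ) < m)
  have eLL : (univ.filter fun p : Fin n × Fin n => p.1 < p.2 ∧ σ p.2 < σ p.1).filter
        (fun p : Fin n × Fin n => (p.2 : ℕ) < m)
      = univ.filter (fun p : Fin n × Fin n =>
          (p.1 < p.2 ∧ σ p.2 < σ p.1) ∧ (p.2 : ℕ) < m) := by
    ext p
    simp only [Finset.mem_filter, Finset.mem_univ, true_and, not_lt, Fin.lt_def]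
    all_goals omega
  have eMid : (univ.filter fun p : Fin n × Fin n => p.1 < p.2 ∧ σ p.2 < σ p.1).filter
        (fun p : Fin n × Fin n => ¬ (p.2 : ℕ) < m)
      = univ.filter (fun p : Fin n × Fin n =>
          (p.1 < p.2 ∧ σ p.2 < σ p.1) ∧ m ≤ (p.2 : ℕ)) := by
    ext p
    simp only [Finset.mem_filter, Finset.mem_univ, true_and, not_lt, Fin.lt_def]
    all_goals omega
  have eLR : (univ.filter fun p : Fin n × Fin n =>
        (p.1 < p.2 ∧ σ p.2 < σ p.1) ∧ m ≤ (p.2 : ℕ)).filter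
        (fun p : Fin n × Fin n => (p.1 : ℕ) < m)
      = univ.filter (fun p : Fin n × Fin n =>
          (p.1 < p.2 ∧ σ p.2 < σ p.1) ∧ (p.1 : ℕ) < m ∧ m ≤ (p.2 : ℕ)) := by
    ext p
    simp only [Finset.mem_filter, Finset.mem_univ, true_and, not_lt, Fin.lt_def]
    all_goals omega
  have eRR : (univ.filter fun p : Fin n × Fin n =>
        (p.1 < p.2 ∧ σ p.2 < σ p.1) ∧ m ≤ (p.2 : ℕ)).filter
        (fun p : Fin n × Fin n => ¬ (p.1 : ℕ) < m)
      = univ.filter (fun p : Fin n × Fin n =>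
          (p.1 < p.2 ∧ σ p.2 < σ p.1) ∧ m ≤ (p.1 : ℕ)) := by
    ext p
    simp only [Finset.mem_filter, Finset.mem_univ, true_and, not_lt, Fin.lt_def]
    all_goals omega
  rw [eLL, eMid] at h1
  rw [eLR, eRR] at h2
  unfold inversions cLL cLR cRR
  omega

lemma cLL_eq (h : k ≤ n) (α : Equiv.Perm (Fin n)) (hα : BlockIncreasing k α)
    (β : Equiv.Perm (Fin (n - k))) (γ : Equiv.Perm (Fin k)) :
    cLL (n - k) (α * blockSum h β γ) = inversions β := by
  classical
  unfold cLL inversions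
  symm
  have hmn : n - k ≤ n := Nat.sub_le n k
  apply Finset.card_bij
    (i := fun q _ => ((Fin.castLE hmn q.1, Fin.castLE hmn q.2) : Fin n × Fin n))
  · intro q hq
    simp only [Finset.mem_filter, Finset.mem_univ, true_and] at hq ⊢
    obtain ⟨hq1, hq2⟩ := hq
    have hv1 : ((Fin.castLE hmn q.1 : Fin n) : ℕ) < n - k := q.1.2
    have hv2 : ((Fin.castLE hmn q.2 : Fin n) : ℕ) < n - k := q.2.2
    have e1 : ((blockSum h β γ (Fin.castLE hmn q.1) : Fin n) : ℕ) = β q.1 := by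
      simpa using bs_lt h β γ _ hv1
    have e2 : ((blockSum h β γ (Fin.castLE hmn q.2) : Fin n) : ℕ) = β q.2 := by
      simpa using bs_lt h β γ _ hv2
    refine ⟨⟨?_, ?_⟩, hv2⟩
    · rw [Fin.lt_def]; exact hq1
    · simp only [Equiv.Perm.mul_apply]
      rw [bi_iff_left hα (bs_lt' h β γ _ hv2) (bs_lt' h β γ _ hv1), Fin.lt_def, e1, e2]
      exact hq2
  · intro a _ b _ hab
    have h1 := congrArg Prod.fst hab
    have h2 := congrArg Prod.snd hab
    simp only at h1 h2
    exact Prod.ext (Fin.castLE_injective hmn h1) (Fin.castLE_injective hmn h2)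
  · intro p hp
    simp only [Finset.mem_filter, Finset.mem_univ, true_and] at hp
    obtain ⟨⟨hp1, hp2⟩, hp3⟩ := hp
    have hp1' : (p.1 : ℕ) < n - k := lt_of_lt_of_le (Fin.lt_def.mp hp1) (le_of_lt hp3) |>.trans_le (le_refl _)
    refine ⟨(⟨p.1, hp1'⟩, ⟨p.2, hp3⟩), ?_, ?_⟩
    · simp only [Finset.mem_filter, Finset.mem_univ, true_and]
      constructor
      · rw [Fin.lt_def]; exact Fin.lt_def.mp hp1
      · simp only [Equiv.Perm.mul_apply] at hp2
        have hb := (bi_iff_left hα (bs_lt' h β γ _ hp3) (bs_lt' h β γ _ hp1')).mp hp2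
        rw [Fin.lt_def] at hb ⊢
        rw [bs_lt h β γ _ hp1', bs_lt h β γ _ hp3] at hb
        exact hb
    · exact Prod.ext (Fin.ext rfl) (Fin.ext rfl)

lemma cRR_eq (h : k ≤ n) (α : Equiv.Perm (Fin n)) (hα : BlockIncreasing k α)
    (β : Equiv.Perm (Fin (n - k))) (γ : Equiv.Perm (Fin k)) :
    cRR (n - k) (α * blockSum h β γ) = inversions γ := by
  classical
  unfold cRR inversions
  symm
  have hkn : ∀ a : Fin k, n - k + (a : ℕ) < n := by
    intro a; have := a.2; omega
  apply Finset.card_bij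
    (i := fun q _ => (((⟨n - k + q.1, hkn q.1⟩ : Fin n), (⟨n - k + q.2, hkn q.2⟩ : Fin n))
      : Fin n × Fin n))
  · intro q hq
    simp only [Finset.mem_filter, Finset.mem_univ, true_and] at hq ⊢
    obtain ⟨hq1, hq2⟩ := hq
    have hv1 : n - k ≤ ((⟨n - k + q.1, hkn q.1⟩ : Fin n) : ℕ) := Nat.le_add_right _ _
    have hv2 : n - k ≤ ((⟨n - k + q.2, hkn q.2⟩ : Fin n) : ℕ) := Nat.le_add_right _ _
    have idx1 : (⟨((⟨n - k + q.1, hkn q.1⟩ : Fin n) : ℕ) - (n - k), by omega⟩ : Fin k) = q.1 := by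
      apply Fin.ext; simp
    have idx2 : (⟨((⟨n - k + q.2, hkn q.2⟩ : Fin n) : ℕ) - (n - k), by omega⟩ : Fin k) = q.2 := by
      apply Fin.ext; simp
    have e1 : ((blockSum h β γ ⟨n - k + q.1, hkn q.1⟩ : Fin n) : ℕ) = n - k + γ q.1 := by
      rw [bs_ge h β γ _ hv1, idx1]
    have e2 : ((blockSum h β γ ⟨n - k + q.2, hkn q.2⟩ : Fin n) : ℕ) = n - k + γ q.2 := by
      rw [bs_ge h β γ _ hv2, idx2]
    refine ⟨⟨?_, ?_⟩, hv1⟩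
    · rw [Fin.lt_def]; simp only []; have := Fin.lt_def.mp hq1; omega
    · simp only [Equiv.Perm.mul_apply]
      rw [bi_iff_right hα (bs_ge' h β γ _ hv2) (bs_ge' h β γ _ hv1), Fin.lt_def, e1, e2]
      have := Fin.lt_def.mp hq2; omega
  · intro a _ b _ hab
    have h1 := congrArg (fun p : Fin n × Fin n => (p.1 : ℕ)) hab
    have h2 := congrArg (fun p : Fin n × Fin n => (p.2 : ℕ)) hab
    simp only at h1 h2
    exact Prod.ext (Fin.ext (by omega)) (Fin.ext (by omega))
  · intro p hp
    simp only [Finset.mem_filter, Finset.mem_univ, true_and] at hp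
    obtain ⟨⟨hp1, hp2⟩, hp3⟩ := hp
    have hp1n : (p.1 : ℕ) < n := p.1.2
    have hp2n : (p.2 : ℕ) < n := p.2.2
    have hq1 : (p.1 : ℕ) - (n - k) < k := by omega
    have hq2 : (p.2 : ℕ) - (n - k) < k := by omega
    refine ⟨(⟨(p.1 : ℕ) - (n - k), hq1⟩, ⟨(p.2 : ℕ) - (n - k), hq2⟩), ?_, ?_⟩
    · simp only [Finset.mem_filter, Finset.mem_univ, true_and]
      have hp3' : n - k ≤ (p.2 : ℕ) := le_trans hp3 (le_of_lt (Fin.lt_def.mp hp1))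
      constructor
      · rw [Fin.lt_def]; simp only []; have := Fin.lt_def.mp hp1; omega
      · simp only [Equiv.Perm.mul_apply] at hp2
        have hb := (bi_iff_right hα (bs_ge' h β γ _ hp3') (bs_ge' h β γ _ hp3)).mp hp2
        rw [Fin.lt_def] at hb ⊢
        rw [bs_ge h β γ _ hp3, bs_ge h β γ _ hp3'] at hb
        omega
    · exact Prod.ext (Fin.ext (by simp; omega)) (Fin.ext (by simp; omega))

lemma cLR_eq (h : k ≤ n) (α : Equiv.Perm (Fin n))
    (β : Equiv.Perm (Fin (n - k))) (γ : Equiv.Perm (Fin k)) :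
    cLR (n - k) (α * blockSum h β γ) = cLR (n - k) α := by
  classical
  unfold cLR
  apply Finset.card_bij
    (i := fun p _ => ((blockSum h β γ p.1, blockSum h β γ p.2) : Fin n × Fin n))
  · intro p hp
    simp only [Finset.mem_filter, Finset.mem_univ, true_and] at hp ⊢
    simp only [Equiv.Perm.mul_apply] at hp ⊢
    obtain ⟨⟨hp1, hp2⟩, hp3, hp4⟩ := hp
    have b1 := bs_lt' h β γ p.1 hp3
    have b2 := bs_ge' h β γ p.2 hp4
    exact ⟨⟨Fin.lt_def.mpr (by omega), hp2⟩, b1, b2⟩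
  · intro a _ b _ hab
    have h1 := congrArg Prod.fst hab
    have h2 := congrArg Prod.snd hab
    simp only at h1 h2
    exact Prod.ext ((blockSum h β γ).injective h1) ((blockSum h β γ).injective h2)
  · intro p hp
    simp only [Finset.mem_filter, Finset.mem_univ, true_and] at hp
    obtain ⟨⟨hp1, hp2⟩, hp3, hp4⟩ := hp
    have b1 := bsinv_lt h β γ p.1 hp3
    have b2 := bsinv_ge h β γ p.2 hp4
    refine ⟨((blockSum h β γ)⁻¹ p.1, (blockSum h β γ)⁻¹ p.2), ?_, ?_⟩
    · simp only [Finset.mem_filter, Finset.mem_univ, true_and]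
      simp only [Equiv.Perm.mul_apply, perm_apply_inv_self]
      exact ⟨⟨Fin.lt_def.mpr (by omega), hp2⟩, b1, b2⟩
    · simp [perm_apply_inv_self]

lemma cLL_zero (α : Equiv.Perm (Fin n)) (hα : BlockIncreasing k α) :
    cLL (n - k) α = 0 := by
  unfold cLL
  rw [Finset.card_eq_zero, Finset.eq_empty_iff_forall_notMem]
  intro p hp
  simp only [Finset.mem_filter, Finset.mem_univ, true_and] at hp
  obtain ⟨⟨hp1, hp2⟩, hp3⟩ := hp
  exact absurd (hα.1 p.1 p.2 hp1 hp3) (not_lt.mpr (le_of_lt hp2))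

lemma cRR_zero (α : Equiv.Perm (Fin n)) (hα : BlockIncreasing k α) :
    cRR (n - k) α = 0 := by
  unfold cRR
  rw [Finset.card_eq_zero, Finset.eq_empty_iff_forall_notMem]
  intro p hp
  simp only [Finset.mem_filter, Finset.mem_univ, true_and] at hp
  obtain ⟨⟨hp1, hp2⟩, hp3⟩ := hp
  exact absurd (hα.2 p.1 p.2 hp1 hp3) (not_lt.mpr (le_of_lt hp2))

lemma inv_formula (h : k ≤ n) (α : Equiv.Perm (Fin n)) (hα : BlockIncreasing k α)
    (β : Equiv.Perm (Fin (n - k))) (γ : Equiv.Perm (Fin k)) :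
    inversions (α * blockSum h β γ) = inversions α + inversions β + inversions γ := by
  rw [inversions_split (n - k) (α * blockSum h β γ), inversions_split (n - k) α,
    cLL_eq h α hα β γ, cRR_eq h α hα β γ, cLR_eq h α β γ, cLL_zero α hα, cRR_zero α hα]
  omega

def emb2 (h : k ≤ n) (j : Fin k) : Fin n := ⟨n - k + j, by have := j.2; omega⟩

lemma blockSum_apply_castLE (h : k ≤ n) (β : Equiv.Perm (Fin (n - k))) (γ : Equiv.Perm (Fin k))
    (i : Fin (n - k)) :
    blockSum h β γ (Fin.castLE (Nat.sub_le n k) i) = Fin.castLE (Nat.sub_le n k) (β i) := by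
  apply Fin.ext
  rw [bs_lt h β γ _ (show ((Fin.castLE (Nat.sub_le n k) i : Fin n) : ℕ) < n - k from i.2)]
  simp

lemma blockSum_apply_emb2 (h : k ≤ n) (β : Equiv.Perm (Fin (n - k))) (γ : Equiv.Perm (Fin k))
    (j : Fin k) :
    blockSum h β γ (emb2 h j) = emb2 h (γ j) := by
  apply Fin.ext
  rw [bs_ge h β γ _ (show n - k ≤ ((emb2 h j : Fin n) : ℕ) from Nat.le_add_right _ _)]
  have eX : ∀ (hh : ((emb2 h j : Fin n) : ℕ) - (n - k) < k),
      (⟨((emb2 h j : Fin n) : ℕ) - (n - k), hh⟩ : Fin k) = j := by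
    intro hh; apply Fin.ext; simp [emb2]
  rw [eX]
  rfl

lemma range_left (h : k ≤ n) (α : Equiv.Perm (Fin n)) (β : Equiv.Perm (Fin (n - k)))
    (γ : Equiv.Perm (Fin k)) :
    Set.range (fun i : Fin (n - k) => α (Fin.castLE (Nat.sub_le n k) i))
      = (fun x => (α * blockSum h β γ) x) '' {x : Fin n | (x : ℕ) < n - k} := by
  ext y
  constructor
  · rintro ⟨i, rfl⟩
    refine ⟨(blockSum h β γ)⁻¹ (Fin.castLE (Nat.sub_le n k) i),
      bsinv_lt h β γ _ i.2, ?_⟩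
    simp [Equiv.Perm.mul_apply, perm_apply_inv_self]
  · rintro ⟨x, hx, rfl⟩
    refine ⟨⟨((blockSum h β γ x : Fin n) : ℕ), bs_lt' h β γ x hx⟩, ?_⟩
    simp only [Equiv.Perm.mul_apply]
    exact congrArg α (Fin.ext rfl)

lemma range_right (h : k ≤ n) (α : Equiv.Perm (Fin n)) (β : Equiv.Perm (Fin (n - k)))
    (γ : Equiv.Perm (Fin k)) :
    Set.range (fun j : Fin k => α (emb2 h j))
      = (fun x => (α * blockSum h β γ) x) '' {x : Fin n | n - k ≤ (x : ℕ)} := by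
  ext y
  constructor
  · rintro ⟨j, rfl⟩
    refine ⟨(blockSum h β γ)⁻¹ (emb2 h j),
      bsinv_ge h β γ _ (Nat.le_add_right _ _), ?_⟩
    simp [Equiv.Perm.mul_apply, perm_apply_inv_self]
  · rintro ⟨x, hx, rfl⟩
    have hbx := bs_ge' h β γ x hx
    have hbn : ((blockSum h β γ x : Fin n) : ℕ) < n := (blockSum h β γ x).2
    refine ⟨⟨((blockSum h β γ x : Fin n) : ℕ) - (n - k), by omega⟩, ?_⟩
    simp only [Equiv.Perm.mul_apply]
    refine congrArg α (Fin.ext ?_)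
    show n - k + (((blockSum h β γ x : Fin n) : ℕ) - (n - k)) = _
    omega

lemma sm_left {α : Equiv.Perm (Fin n)} (hα : BlockIncreasing k α) :
    StrictMono (fun i : Fin (n - k) => α (Fin.castLE (Nat.sub_le n k) i)) := by
  intro i j hij
  exact hα.1 _ _ (Fin.lt_def.mpr hij) j.2

lemma sm_right (h : k ≤ n) {α : Equiv.Perm (Fin n)} (hα : BlockIncreasing k α) :
    StrictMono (fun j : Fin k => α (emb2 h j)) := by
  intro i j hij
  exact hα.2 _ _ (Fin.lt_def.mpr (by simp [emb2]; omega)) (Nat.le_add_right _ _)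

lemma map_injective (h : k ≤ n) :
    Function.Injective
      (fun t : {α : Equiv.Perm (Fin n) // BlockIncreasing k α} ×
          Equiv.Perm (Fin (n - k)) × Equiv.Perm (Fin k) =>
        (t.1 : Equiv.Perm (Fin n)) * blockSum h t.2.1 t.2.2) := by
  rintro ⟨⟨α₁, hα₁⟩, β₁, γ₁⟩ ⟨⟨α₂, hα₂⟩, β₂, γ₂⟩ heq
  simp only at heq
  have hmn : n - k ≤ n := Nat.sub_le n k
  have hr1 : Set.range (fun i : Fin (n - k) => α₁ (Fin.castLE hmn i))
      = Set.range (fun i : Fin (n - k) => α₂ (Fin.castLE hmn i)) := by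
    rw [range_left h α₁ β₁ γ₁, range_left h α₂ β₂ γ₂, heq]
  have hr2 : Set.range (fun j : Fin k => α₁ (emb2 h j))
      = Set.range (fun j : Fin k => α₂ (emb2 h j)) := by
    rw [range_right h α₁ β₁ γ₁, range_right h α₂ β₂ γ₂, heq]
  have i1 : WellFoundedLT (Fin (n - k)) := inferInstance
  have i2 : WellFoundedLT (Fin k) := inferInstance
  have e1 := (@StrictMono.range_inj (Fin (n - k)) (Fin n) _ _ i1 _ _
    (sm_left hα₁) (sm_left hα₂)).mp hr1
  have e2 := (@StrictMono.range_inj (Fin k) (Fin n) _ _ i2 _ _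
    (sm_right h hα₁) (sm_right h hα₂)).mp hr2
  have hαeq : α₁ = α₂ := by
    apply Equiv.ext; intro x
    by_cases hx : (x : ℕ) < n - k
    · have hxe : x = Fin.castLE hmn ⟨x, hx⟩ := Fin.ext rfl
      rw [hxe]; exact congrFun e1 ⟨x, hx⟩
    · have hx' : n - k ≤ (x : ℕ) := le_of_not_gt hx
      have hxk : (x : ℕ) - (n - k) < k := by have := x.2; omega
      have hxe : x = emb2 h ⟨(x : ℕ) - (n - k), hxk⟩ := by
        apply Fin.ext; show (x : ℕ) = n - k + ((x : ℕ) - (n - k)); omega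
      rw [hxe]; exact congrFun e2 _
  have hbs : blockSum h β₁ γ₁ = blockSum h β₂ γ₂ := by
    rw [hαeq] at heq; exact mul_left_cancel heq
  have hβ : β₁ = β₂ := by
    apply Equiv.ext; intro i; apply Fin.ext
    have e1' := congrArg (fun z : Fin n => (z : ℕ))
      (blockSum_apply_castLE h β₁ γ₁ i)
    have e2' := congrArg (fun z : Fin n => (z : ℕ))
      (blockSum_apply_castLE h β₂ γ₂ i)
    rw [hbs] at e1'
    simp only [Fin.coe_castLE] at e1' e2'
    omega
  have hγ : γ₁ = γ₂ := by
    apply Equiv.ext; intro j; apply Fin.ext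
    have e1' := congrArg (fun z : Fin n => (z : ℕ)) (blockSum_apply_emb2 h β₁ γ₁ j)
    have e2' := congrArg (fun z : Fin n => (z : ℕ)) (blockSum_apply_emb2 h β₂ γ₂ j)
    rw [hbs] at e1'
    simp only [emb2] at e1' e2'
    omega
  subst hαeq hβ hγ
  rfl

lemma map_surjective (h : k ≤ n) :
    Function.Surjective
      (fun t : {α : Equiv.Perm (Fin n) // BlockIncreasing k α} ×
          Equiv.Perm (Fin (n - k)) × Equiv.Perm (Fin k) =>
        (t.1 : Equiv.Perm (Fin n)) * blockSum h t.2.1 t.2.2) := by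
  intro σ
  have hmn : n - k ≤ n := Nat.sub_le n k
  set f₁ : Fin (n - k) → Fin n := fun j => σ (Fin.castLE hmn j) with hf₁
  set f₂ : Fin k → Fin n := fun j => σ (emb2 h j) with hf₂
  set β : Equiv.Perm (Fin (n - k)) := (Tuple.sort f₁)⁻¹ with hβ
  set γ : Equiv.Perm (Fin k) := (Tuple.sort f₂)⁻¹ with hγ
  set α : Equiv.Perm (Fin n) := σ * (blockSum h β γ)⁻¹ with hα
  have inj1 : Function.Injective (f₁ ∘ Tuple.sort f₁) :=
    ((σ.injective.comp (Fin.castLE_injective hmn)).comp (Tuple.sort f₁).injective)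
  have inj2 : Function.Injective (f₂ ∘ Tuple.sort f₂) := by
    have he : Function.Injective (emb2 h) := by
      intro a b hab
      apply Fin.ext
      have := congrArg (fun z : Fin n => (z : ℕ)) hab
      simp only [emb2] at this
      omega
    exact (σ.injective.comp he).comp (Tuple.sort f₂).injective
  have s1 : StrictMono (f₁ ∘ Tuple.sort f₁) :=
    (Tuple.monotone_sort f₁).strictMono_of_injective inj1
  have s2 : StrictMono (f₂ ∘ Tuple.sort f₂) :=
    (Tuple.monotone_sort f₂).strictMono_of_injective inj2
  have val_left : ∀ (x : Fin n) (hx : (x : ℕ) < n - k),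
      α x = (f₁ ∘ Tuple.sort f₁) ⟨x, hx⟩ := by
    intro x hx
    have hb : (blockSum h β γ)⁻¹ x = Fin.castLE hmn (β⁻¹ ⟨x, hx⟩) := by
      rw [Equiv.Perm.inv_eq_iff_eq]  -- maybe wrong name
      rw [blockSum_apply_castLE]
      rw [perm_apply_inv_self]
      exact (Fin.ext rfl)
    show σ ((blockSum h β γ)⁻¹ x) = _
    rw [hb]
    show f₁ (β⁻¹ ⟨x, hx⟩) = f₁ (Tuple.sort f₁ ⟨x, hx⟩)
    rw [hβ, inv_inv]
  have val_right : ∀ (x : Fin n) (hx : n - k ≤ (x : ℕ)) (hxk : (x : ℕ) - (n - k) < k),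
      α x = (f₂ ∘ Tuple.sort f₂) ⟨(x : ℕ) - (n - k), hxk⟩ := by
    intro x hx hxk
    have hb : (blockSum h β γ)⁻¹ x = emb2 h (γ⁻¹ ⟨(x : ℕ) - (n - k), hxk⟩) := by
      rw [Equiv.Perm.inv_eq_iff_eq]
      rw [blockSum_apply_emb2]
      rw [perm_apply_inv_self]
      apply Fin.ext
      show (x : ℕ) = n - k + ((x : ℕ) - (n - k))
      omega
    show σ ((blockSum h β γ)⁻¹ x) = _
    rw [hb]
    show f₂ (γ⁻¹ _) = f₂ (Tuple.sort f₂ _)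
    rw [hγ, inv_inv]
  have hbi : BlockIncreasing k α := by
    constructor
    · intro i j hij hjm
      have him : (i : ℕ) < n - k := lt_trans (Fin.lt_def.mp hij) hjm
      rw [val_left i him, val_left j hjm]
      exact s1 (Fin.lt_def.mpr (Fin.lt_def.mp hij))
    · intro i j hij him
      have hin : (i : ℕ) < n := i.2
      have hjn : (j : ℕ) < n := j.2
      have hjm : n - k ≤ (j : ℕ) := le_trans him (le_of_lt (Fin.lt_def.mp hij))
      have hik : (i : ℕ) - (n - k) < k := by omega
      have hjk : (j : ℕ) - (n - k) < k := by omega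
      rw [val_right i him hik, val_right j hjm hjk]
      exact s2 (Fin.lt_def.mpr (by have := Fin.lt_def.mp hij; simp; omega))
  refine ⟨⟨⟨α, hbi⟩, β, γ⟩, ?_⟩
  simp only [hα]
  exact inv_mul_cancel_right σ _

end BSaux

theorem blockIncreasing_coset_decomposition (n k : ℕ) (h : k ≤ n) :
    Function.Bijective
      (fun t : {α : Equiv.Perm (Fin n) // BlockIncreasing k α} ×
          Equiv.Perm (Fin (n - k)) × Equiv.Perm (Fin k) =>
        (t.1 : Equiv.Perm (Fin n)) * blockSum h t.2.1 t.2.2) ∧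
    ∀ (α : Equiv.Perm (Fin n)) (β : Equiv.Perm (Fin (n - k))) (γ : Equiv.Perm (Fin k)),
      BlockIncreasing k α →
        inversions (α * blockSum h β γ) = inversions α + inversions β + inversions γ := by
  refine ⟨⟨BSaux.map_injective h, BSaux.map_surjective h⟩, ?_⟩
  intro α β γ hα
  exact BSaux.inv_formula h α hα β γ
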